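/- Every graph-based logic that has an algebraic semantics has a unital matrix semantics; in particular, for such a logic with a unary connective □, the rules x, y, □ⁿx ⊢ □ⁿy are valid for all n ∈ ω. -/
import Mathlib


/-- An algebraic signature: a type of operation symbols with arities. -/
structure Sig : Type 1 where
  Op : Type
  ar : Op → ℕ

/-- Formulas (terms) over a signature, with variables indexed by ℕ. -/
inductive Fm (L : Sig) : Type where
  | var : ℕ → Fm L
  | op : (f : L.Op) → (Fin (L.ar f) → Fm L) → Fm L

/-- An algebra for the signature `L`. -/
structure Alg (L : Sig) : Type 1 where
  carrier : Type
  interp : (f : L.Op) → (Fin (L.ar f) → carrier) → carrier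

/-- Evaluation of a formula in an algebra under a valuation of the variables. -/
def Fm.eval {L : Sig} (A : Alg L) (v : ℕ → A.carrier) : Fm L → A.carrier
  | .var n => v n
  | .op f as => A.interp f (fun i => (as i).eval A v)

/-- Substitution (endomorphism of the formula algebra). -/
def Fm.subst {L : Sig} (σ : ℕ → Fm L) : Fm L → Fm L
  | .var n => σ n
  | .op f as => .op f (fun i => (as i).subst σ)

/-- The set of variables occurring in a formula. -/
def Fm.vars {L : Sig} : Fm L → Set ℕ
  | .var n => {n}
  | .op _ as => ⋃ i, (as i).vars

/-- Substitute the formula `ψ` for the variable `v` in `φ`. -/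
def Fm.subst1 {L : Sig} (v : ℕ) (ψ : Fm L) (φ : Fm L) : Fm L :=
  φ.subst (fun n => if n = v then ψ else .var n)

/-- A logic: a substitution-invariant (finitary or not) consequence relation on formulas. -/
structure Logic (L : Sig) : Type where
  deriv : Set (Fm L) → Fm L → Prop
  axm : ∀ Γ φ, φ ∈ Γ → deriv Γ φ
  mono : ∀ Γ Δ φ, Γ ⊆ Δ → deriv Γ φ → deriv Δ φ
  cut : ∀ Γ Δ φ, deriv Γ φ → (∀ γ ∈ Γ, deriv Δ γ) → deriv Δ φ
  substInv : ∀ (σ : ℕ → Fm L) Γ φ, deriv Γ φ → deriv (Fm.subst σ '' Γ) (φ.subst σ)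

/-- A logical matrix: an algebra with a set of designated elements. -/
structure LMatrix (L : Sig) : Type 1 where
  alg : Alg L
  F : Set alg.carrier

/-- The consequence relation induced by a class of matrices. -/
def inducedBy {L : Sig} (M : Set (LMatrix L)) (Γ : Set (Fm L)) (φ : Fm L) : Prop :=
  ∀ m ∈ M, ∀ v : ℕ → m.alg.carrier,
    (∀ γ ∈ Γ, γ.eval m.alg v ∈ m.F) → φ.eval m.alg v ∈ m.F

/-- `M` is a matrix semantics for the logic `ℒ`. -/
def IsMatrixSemantics {L : Sig} (ℒ : Logic L) (M : Set (LMatrix L)) : Prop :=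
  ∀ Γ φ, ℒ.deriv Γ φ ↔ inducedBy M Γ φ

/-- Equational consequence relative to a class of algebras (equations as pairs of formulas). -/
def eqConseq {L : Sig} (K : Set (Alg L)) (Θ : Set (Fm L × Fm L)) (e : Fm L × Fm L) : Prop :=
  ∀ A ∈ K, ∀ v : ℕ → A.carrier,
    (∀ p ∈ Θ, p.1.eval A v = p.2.eval A v) → e.1.eval A v = e.2.eval A v

/-- `τ(φ)`: the result of substituting `φ` for the variable `x` (= variable 0) in each
equation of `τ`. -/
def tauApp {L : Sig} (τ : Set (Fm L × Fm L)) (φ : Fm L) : Set (Fm L × Fm L) :=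
  (fun e => (Fm.subst1 0 φ e.1, Fm.subst1 0 φ e.2)) '' τ

/-- `τ[Γ]`. -/
def tauAppSet {L : Sig} (τ : Set (Fm L × Fm L)) (Γ : Set (Fm L)) : Set (Fm L × Fm L) :=
  ⋃ γ ∈ Γ, tauApp τ γ

/-- `τ` is a set of equations in the single variable `x` (= variable 0). -/
def IsUnivalent {L : Sig} (τ : Set (Fm L × Fm L)) : Prop :=
  ∀ e ∈ τ, e.1.vars ⊆ ({0} : Set ℕ) ∧ e.2.vars ⊆ ({0} : Set ℕ)

/-- `K` is a `τ`-algebraic semantics for `ℒ`: `Γ ⊢ φ` iff `τ[Γ] ⊨_K τ(φ)`. -/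
def IsTauAlgSem {L : Sig} (ℒ : Logic L) (τ : Set (Fm L × Fm L)) (K : Set (Alg L)) : Prop :=
  IsUnivalent τ ∧ ∀ Γ φ, ℒ.deriv Γ φ ↔ ∀ e ∈ tauApp τ φ, eqConseq K (tauAppSet τ Γ) e

/-- `ℒ` has an algebraic semantics (admits an equational completeness theorem). -/
def HasAlgSem {L : Sig} (ℒ : Logic L) : Prop :=
  ∃ (τ : Set (Fm L × Fm L)) (K : Set (Alg L)), IsTauAlgSem ℒ τ K

/-- `θ` is a congruence of the algebra `A`. -/
def IsCong {L : Sig} (A : Alg L) (θ : A.carrier → A.carrier → Prop) : Prop :=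
  Equivalence θ ∧ ∀ (f : L.Op) (as bs : Fin (L.ar f) → A.carrier),
    (∀ i, θ (as i) (bs i)) → θ (A.interp f as) (A.interp f bs)

/-- The congruence of `A` generated by `X` (least congruence containing `X`). -/
def congGen {L : Sig} (A : Alg L) (X : Set (A.carrier × A.carrier))
    (a c : A.carrier) : Prop :=
  ∀ θ, IsCong A θ → (∀ p ∈ X, θ p.1 p.2) → θ a c

/-- `p` is a unary polynomial function of `A`: `p(a) = φ^A(a, c⃗)` for a formula `φ(x, y⃗)`
and parameters `c⃗` from `A`. -/
def IsUnaryPoly {L : Sig} (A : Alg L) (p : A.carrier → A.carrier) : Prop :=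
  ∃ (φ : Fm L) (c : ℕ → A.carrier),
    ∀ a, p a = φ.eval A (fun n => if n = 0 then a else c n)

/-- Compatibility of a relation with a set. -/
def Compatible {L : Sig} (A : Alg L) (θ : A.carrier → A.carrier → Prop)
    (F : Set A.carrier) : Prop :=
  ∀ a c, θ a c → a ∈ F → c ∈ F

/-- The Leibniz congruence `Ω^A F`: the largest congruence of `A` compatible with `F`
(realized as the union of all congruences compatible with `F`). -/
def leibniz {L : Sig} (A : Alg L) (F : Set A.carrier) (a c : A.carrier) : Prop :=
  ∃ θ, IsCong A θ ∧ Compatible A θ F ∧ θ a c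

/-- The formula algebra. -/
def FmAlg (L : Sig) : Alg L :=
  ⟨Fm L, fun f as => Fm.op f as⟩

/-- `ℒ` has no theorems. -/
def LacksTheorems {L : Sig} (ℒ : Logic L) : Prop :=
  ¬ ∃ φ, ℒ.deriv ∅ φ

/-- `ℒ` is assertional. -/
def Assertional {L : Sig} (ℒ : Logic L) : Prop :=
  ∃ (M : Set (LMatrix L)) (φ : Fm L), IsMatrixSemantics ℒ M ∧ φ.vars ⊆ ({0} : Set ℕ) ∧
    ∀ m ∈ M, ∃ c : m.alg.carrier,
      (∀ a : m.alg.carrier, φ.eval m.alg (fun _ => a) = c) ∧ m.F = {c}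

/-- `ℒ` is almost assertional. -/
def AlmostAssertional {L : Sig} (ℒ : Logic L) : Prop :=
  LacksTheorems ℒ ∧
  ∃ (M : Set (LMatrix L)) (φ : Fm L), IsMatrixSemantics ℒ M ∧ φ.vars ⊆ ({0} : Set ℕ) ∧
    ∀ m ∈ M, m.F.Nonempty → ∃ c : m.alg.carrier,
      (∀ a : m.alg.carrier, φ.eval m.alg (fun _ => a) = c) ∧ m.F = {c}

/-- Two formulas are logically equivalent in `ℒ`. -/
def LogEquiv {L : Sig} (ℒ : Logic L) (ε δ : Fm L) : Prop :=
  ∀ (φ : Fm L) (v : ℕ),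
    ℒ.deriv {Fm.subst1 v ε φ} (Fm.subst1 v δ φ) ∧
    ℒ.deriv {Fm.subst1 v δ φ} (Fm.subst1 v ε φ)

/-- A signature is graph-based: all arities are ≤ 1 and there is at most one unary symbol. -/
def GraphBased (L : Sig) : Prop :=
  (∀ f : L.Op, L.ar f ≤ 1) ∧ ∀ f g : L.Op, L.ar f = 1 → L.ar g = 1 → f = g

/-- Iterated application of a unary connective. -/
def boxIter {L : Sig} (b : L.Op) : ℕ → Fm L → Fm L
  | 0, φ => φ
  | n + 1, φ => Fm.op b (fun _ => boxIter b n φ)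

/-! ### Auxiliary lemmas -/

theorem Fm.eval_subst {L : Sig} (A : Alg L) (v : ℕ → A.carrier) (σ : ℕ → Fm L) :
    ∀ φ : Fm L, (φ.subst σ).eval A v = φ.eval A (fun n => (σ n).eval A v)
  | .var _ => rfl
  | .op f as => by
      simp only [Fm.subst, Fm.eval]
      congr 1
      funext i
      exact Fm.eval_subst A v σ (as i)

theorem Fm.eval_congr {L : Sig} (A : Alg L) {u w : ℕ → A.carrier} :
    ∀ φ : Fm L, (∀ n ∈ φ.vars, u n = w n) → φ.eval A u = φ.eval A w
  | .var n, h => h n rfl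
  | .op f as, h => by
      simp only [Fm.eval]
      congr 1
      funext i
      exact Fm.eval_congr A (as i) (fun n hn => h n (Set.mem_iUnion.2 ⟨i, hn⟩))

theorem Fm.subst_var {L : Sig} : ∀ φ : Fm L, φ.subst Fm.var = φ
  | .var _ => rfl
  | .op f as => by
      simp only [Fm.subst]
      congr 1
      funext i
      exact Fm.subst_var (as i)

theorem subst_boxIter {L : Sig} (σ : ℕ → Fm L) (b : L.Op) :
    ∀ (n : ℕ) (φ : Fm L), (boxIter b n φ).subst σ = boxIter b n (φ.subst σ)
  | 0, _ => rfl
  | n + 1, φ => by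
      simp only [boxIter, Fm.subst]
      congr 1
      funext _
      exact subst_boxIter σ b n φ

theorem eval_boxIter {L : Sig} (A : Alg L) (v : ℕ → A.carrier) (b : L.Op) :
    ∀ (n : ℕ) (φ : Fm L),
      (boxIter b n φ).eval A v = (fun x => A.interp b (fun _ => x))^[n] (φ.eval A v)
  | 0, _ => rfl
  | n + 1, φ => by
      simp only [boxIter, Fm.eval, Function.iterate_succ_apply']
      congr 1
      funext _
      exact eval_boxIter A v b n φ

theorem boxIter_one {L : Sig} (b : L.Op) :
    ∀ (n : ℕ) (φ : Fm L), boxIter b n (boxIter b 1 φ) = boxIter b (n + 1) φ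
  | 0, _ => rfl
  | n + 1, φ => by
      simp only [boxIter]
      congr 1
      funext _
      exact boxIter_one b n φ

/-- In a graph-based signature, a unary operation `b`, and a formula `φ` with variables
among `{0}`, the induced one-variable term function is either constant or an iterate of
the basic unary function. -/
theorem graph_eval {L : Sig} (hL : GraphBased L) (A : Alg L) (b : L.Op) (hb : L.ar b = 1) :
    ∀ φ : Fm L, φ.vars ⊆ ({0} : Set ℕ) →
      (∀ a a' : A.carrier, φ.eval A (fun _ => a) = φ.eval A (fun _ => a')) ∨
      (∃ k, ∀ a : A.carrier,
        φ.eval A (fun _ => a) = (fun x => A.interp b (fun _ => x))^[k] a) := by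
  intro φ
  induction φ with
  | var n =>
      intro h
      have hn : n = 0 := h rfl
      subst hn
      exact Or.inr ⟨0, fun a => rfl⟩
  | op f as ih =>
      intro h
      rcases Nat.lt_or_ge (L.ar f) 1 with hf | hf
      · left
        intro a a'
        simp only [Fm.eval]
        congr 1
        funext i
        exact absurd i.isLt (by omega)
      · have hf1 : L.ar f = 1 := le_antisymm (hL.1 f) hf
        have hfb : f = b := hL.2 f b hf1 hb
        set i0 : Fin (L.ar f) := ⟨0, by omega⟩ with hi0
        have hkey : ∀ u : ℕ → A.carrier,
            (Fm.op f as).eval A u = A.interp f (fun _ => (as i0).eval A u) := by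
          intro u
          simp only [Fm.eval]
          congr 1
          funext i
          have : i = i0 := by
            apply Fin.ext
            have := i.isLt
            simp only [hi0]
            omega
          rw [this]
        have hvars : (as i0).vars ⊆ ({0} : Set ℕ) := by
          intro n hn
          exact h (Set.mem_iUnion.2 ⟨i0, hn⟩)
        rcases ih i0 hvars with hc | ⟨k, hk⟩
        · left
          intro a a'
          rw [hkey, hkey, hc a a']
        · right
          refine ⟨k + 1, fun a => ?_⟩
          rw [hkey, hk a, Function.iterate_succ_apply', hfb]

theorem eval_subst1_single {L : Sig} (A : Alg L) (v : ℕ → A.carrier) (γ s : Fm L)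
    (hs : s.vars ⊆ ({0} : Set ℕ)) :
    (Fm.subst1 0 γ s).eval A v = s.eval A (fun _ => γ.eval A v) := by
  unfold Fm.subst1
  rw [Fm.eval_subst]
  apply Fm.eval_congr
  intro n hn
  have : n = 0 := hs hn
  subst this
  simp

/-! ### The quotient matrix construction -/

/-- A Suszko-style congruence adequate for graph-based signatures: two formulas are
related when all their box-iterates have the same derivability status over `Γ`. -/
def thetaRel {L : Sig} (ℒ : Logic L) (Γ : Set (Fm L)) (α β : Fm L) : Prop :=
  (ℒ.deriv Γ α ↔ ℒ.deriv Γ β) ∧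
  ∀ f : L.Op, L.ar f = 1 → ∀ n : ℕ,
    (ℒ.deriv Γ (boxIter f n α) ↔ ℒ.deriv Γ (boxIter f n β))

theorem thetaRel_equiv {L : Sig} (ℒ : Logic L) (Γ : Set (Fm L)) :
    Equivalence (thetaRel ℒ Γ) := by
  constructor
  · exact fun α => ⟨Iff.rfl, fun _ _ _ => Iff.rfl⟩
  · rintro α β ⟨h1, h2⟩
    exact ⟨h1.symm, fun f hf n => (h2 f hf n).symm⟩
  · rintro α β γ ⟨h1, h2⟩ ⟨g1, g2⟩
    exact ⟨h1.trans g1, fun f hf n => (h2 f hf n).trans (g2 f hf n)⟩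

def thetaSetoid {L : Sig} (ℒ : Logic L) (Γ : Set (Fm L)) : Setoid (Fm L) :=
  ⟨thetaRel ℒ Γ, thetaRel_equiv ℒ Γ⟩

theorem theta_cong {L : Sig} (hL : GraphBased L) (ℒ : Logic L) (Γ : Set (Fm L))
    (f : L.Op) (as bs : Fin (L.ar f) → Fm L)
    (hab : ∀ i, thetaRel ℒ Γ (as i) (bs i)) :
    thetaRel ℒ Γ (Fm.op f as) (Fm.op f bs) := by
  rcases Nat.lt_or_ge (L.ar f) 1 with hf | hf
  · have : as = bs := funext fun i => absurd i.isLt (by omega)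
    rw [this]
    exact (thetaRel_equiv ℒ Γ).refl _
  · have hf1 : L.ar f = 1 := le_antisymm (hL.1 f) hf
    have has : Fm.op f as = boxIter f 1 (as ⟨0, by omega⟩) := by
      simp only [boxIter]
      congr 1
      funext i
      have : i = (⟨0, by omega⟩ : Fin (L.ar f)) := by
        apply Fin.ext; have := i.isLt; omega
      rw [this]
    have hbs : Fm.op f bs = boxIter f 1 (bs ⟨0, by omega⟩) := by
      simp only [boxIter]
      congr 1
      funext i
      have : i = (⟨0, by omega⟩ : Fin (L.ar f)) := by
        apply Fin.ext; have := i.isLt; omega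
      rw [this]
    rw [has, hbs]
    obtain ⟨h1, h2⟩ := hab ⟨0, by omega⟩
    constructor
    · exact h2 f hf1 1
    · intro g hg n
      have hgf : g = f := hL.2 g f hg hf1
      subst hgf
      rw [boxIter_one, boxIter_one]
      exact h2 g hf1 (n + 1)

/-- The quotient algebra of the formula algebra by `thetaRel`. -/
noncomputable def QAlg {L : Sig} (ℒ : Logic L) (Γ : Set (Fm L)) : Alg L where
  carrier := Quotient (thetaSetoid ℒ Γ)
  interp := fun f qs =>
    Quotient.mk (thetaSetoid ℒ Γ) (Fm.op f (fun i => (qs i).out))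

theorem QAlg_mk_op {L : Sig} (hL : GraphBased L) (ℒ : Logic L) (Γ : Set (Fm L))
    (f : L.Op) (as : Fin (L.ar f) → Fm L) :
    (QAlg ℒ Γ).interp f (fun i => Quotient.mk (thetaSetoid ℒ Γ) (as i)) =
      Quotient.mk (thetaSetoid ℒ Γ) (Fm.op f as) := by
  apply Quotient.sound
  apply theta_cong hL
  intro i
  show thetaRel ℒ Γ _ _
  exact Quotient.exact (Quotient.out_eq (Quotient.mk (thetaSetoid ℒ Γ) (as i)))

theorem QAlg_eval {L : Sig} (hL : GraphBased L) (ℒ : Logic L) (Γ : Set (Fm L))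
    (w : ℕ → Fm L) :
    ∀ φ : Fm L, φ.eval (QAlg ℒ Γ) (fun n => Quotient.mk (thetaSetoid ℒ Γ) (w n)) =
      Quotient.mk (thetaSetoid ℒ Γ) (φ.subst w)
  | .var _ => rfl
  | .op f as => by
      show (QAlg ℒ Γ).interp f
          (fun i => (as i).eval (QAlg ℒ Γ) (fun n => Quotient.mk (thetaSetoid ℒ Γ) (w n)))
        = _
      have : (fun i => (as i).eval (QAlg ℒ Γ)
              (fun n => Quotient.mk (thetaSetoid ℒ Γ) (w n))) =
          fun i => Quotient.mk (thetaSetoid ℒ Γ) ((as i).subst w) := by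
        funext i
        exact QAlg_eval hL ℒ Γ w (as i)
      rw [this, QAlg_mk_op hL]
      rfl

/-- The quotient matrix. -/
noncomputable def QMat {L : Sig} (ℒ : Logic L) (Γ : Set (Fm L)) : LMatrix L where
  alg := QAlg ℒ Γ
  F := Quotient.mk (thetaSetoid ℒ Γ) '' {ψ | ℒ.deriv Γ ψ}

theorem QMat_mem_F {L : Sig} (ℒ : Logic L) (Γ : Set (Fm L)) (α : Fm L) :
    Quotient.mk (thetaSetoid ℒ Γ) α ∈ (QMat ℒ Γ).F ↔ ℒ.deriv Γ α := by
  constructor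
  · rintro ⟨t, ht, hta⟩
    have := Quotient.exact hta
    exact this.1.mp ht
  · intro h
    exact ⟨α, h, rfl⟩

/-- A graph-based logic with an algebraic semantics has a unital matrix semantics; in
particular, for a unary connective `□` the rules `x, y, □ⁿx ⊢ □ⁿy` are valid. -/
theorem graph_based_alg_sem_unital {L : Sig} (hL : GraphBased L) (ℒ : Logic L)
    (h : HasAlgSem ℒ) :
    (∃ M : Set (LMatrix L), (∀ m ∈ M, m.F.Subsingleton) ∧ IsMatrixSemantics ℒ M) ∧
    ∀ b : L.Op, L.ar b = 1 → ∀ n : ℕ,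
      ℒ.deriv {Fm.var 0, Fm.var 1, boxIter b n (Fm.var 0)}
        (boxIter b n (Fm.var 1)) := by
  -- Part 2: the rules `x, y, □ⁿx ⊢ □ⁿy` are valid.
  have hrule : ∀ b : L.Op, L.ar b = 1 → ∀ n : ℕ,
      ℒ.deriv {Fm.var 0, Fm.var 1, boxIter b n (Fm.var 0)} (boxIter b n (Fm.var 1)) := by
    obtain ⟨τ, K, huni, hiff⟩ := h
    intro b hb n
    rw [hiff]
    rintro e ⟨⟨s, t⟩, hst, rfl⟩ A hA v hyp
    obtain ⟨hsv, htv⟩ := huni _ hst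
    set B : A.carrier → A.carrier := fun x => A.interp b (fun _ => x) with hB
    set Γ : Set (Fm L) := {Fm.var 0, Fm.var 1, boxIter b n (Fm.var 0)} with hΓ
    have hy : ∀ γ ∈ Γ,
        s.eval A (fun _ => γ.eval A v) = t.eval A (fun _ => γ.eval A v) := by
      intro γ hγ
      have hmem : (Fm.subst1 0 γ s, Fm.subst1 0 γ t) ∈ tauAppSet τ Γ :=
        Set.mem_biUnion hγ ⟨(s, t), hst, rfl⟩
      have h' := hyp _ hmem
      rwa [eval_subst1_single A v γ s hsv, eval_subst1_single A v γ t htv] at h'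
    have H0 := hy (Fm.var 0) (by simp [hΓ])
    have H1 := hy (Fm.var 1) (by simp [hΓ])
    have H2 := hy (boxIter b n (Fm.var 0)) (by simp [hΓ])
    rw [eval_boxIter] at H2
    show (Fm.subst1 0 (boxIter b n (Fm.var 1)) s).eval A v
        = (Fm.subst1 0 (boxIter b n (Fm.var 1)) t).eval A v
    rw [eval_subst1_single A v _ s hsv, eval_subst1_single A v _ t htv, eval_boxIter]
    simp only [Fm.eval] at *
    have comm : ∀ (l : ℕ) (x : A.carrier), B^[l] (B^[n] x) = B^[n] (B^[l] x) := by
      intro l x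
      rw [← Function.iterate_add_apply, ← Function.iterate_add_apply, Nat.add_comm]
    rcases graph_eval hL A b hb s hsv with hcs | ⟨k, hk⟩ <;>
      rcases graph_eval hL A b hb t htv with hct | ⟨l, hl⟩
    · calc s.eval A (fun _ => B^[n] (v 1)) = s.eval A (fun _ => v 0) := hcs _ _
        _ = t.eval A (fun _ => v 0) := H0
        _ = t.eval A (fun _ => B^[n] (v 1)) := hct _ _
    · -- s constant, t an iterate
      simp only [hl] at H0 H1 H2 ⊢
      have hfix : B^[n] (s.eval A (fun _ => v 0)) = s.eval A (fun _ => v 0) := by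
        calc B^[n] (s.eval A (fun _ => v 0)) = B^[n] (B^[l] (v 0)) := by rw [H0]
          _ = B^[l] (B^[n] (v 0)) := (comm l _).symm
          _ = s.eval A (fun _ => B^[n] (v 0)) := H2.symm
          _ = s.eval A (fun _ => v 0) := hcs _ _
      calc s.eval A (fun _ => B^[n] (v 1)) = s.eval A (fun _ => v 0) := hcs _ _
        _ = B^[n] (s.eval A (fun _ => v 0)) := hfix.symm
        _ = B^[n] (s.eval A (fun _ => v 1)) := by rw [hcs (v 0) (v 1)]
        _ = B^[n] (B^[l] (v 1)) := by rw [H1]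
        _ = B^[l] (B^[n] (v 1)) := (comm l _).symm
    · -- t constant, s an iterate
      simp only [hk] at H0 H1 H2 ⊢
      have hfix : B^[n] (t.eval A (fun _ => v 0)) = t.eval A (fun _ => v 0) := by
        calc B^[n] (t.eval A (fun _ => v 0)) = B^[n] (B^[k] (v 0)) := by rw [H0]
          _ = B^[k] (B^[n] (v 0)) := (comm k _).symm
          _ = t.eval A (fun _ => B^[n] (v 0)) := H2
          _ = t.eval A (fun _ => v 0) := hct _ _
      calc B^[k] (B^[n] (v 1)) = B^[n] (B^[k] (v 1)) := comm k _
        _ = B^[n] (t.eval A (fun _ => v 1)) := by rw [H1]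
        _ = B^[n] (t.eval A (fun _ => v 0)) := by rw [hct (v 1) (v 0)]
        _ = t.eval A (fun _ => v 0) := hfix
        _ = t.eval A (fun _ => B^[n] (v 1)) := hct _ _
    · -- both iterates
      simp only [hk, hl] at H1 ⊢
      rw [comm k, comm l, H1]
  refine ⟨?_, hrule⟩
  -- Part 1: the unital matrix semantics given by the quotient matrices.
  refine ⟨Set.range (QMat ℒ), ?_, ?_⟩
  · -- each designated set is a subsingleton
    rintro m ⟨Γ, rfl⟩
    rintro q ⟨t, ht, rfl⟩ q' ⟨t', ht', rfl⟩
    have hkey : ∀ (f : L.Op), L.ar f = 1 → ∀ (n : ℕ) (a c : Fm L),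
        ℒ.deriv Γ a → ℒ.deriv Γ c → ℒ.deriv Γ (boxIter f n a) →
        ℒ.deriv Γ (boxIter f n c) := by
      intro f hf n a c ha hc hba
      have hr := hrule f hf n
      set σ : ℕ → Fm L := fun m => if m = 0 then a else if m = 1 then c else Fm.var m
        with hσ
      have h2 := ℒ.substInv σ _ _ hr
      have hσ0 : σ 0 = a := by simp [hσ]
      have hσ1 : σ 1 = c := by simp [hσ]
      have e1 : Fm.subst σ '' {Fm.var 0, Fm.var 1, boxIter f n (Fm.var 0)} =
          ({a, c, boxIter f n a} : Set (Fm L)) := by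
        rw [Set.image_insert_eq, Set.image_insert_eq, Set.image_singleton,
          subst_boxIter]
        show ({σ 0, σ 1, boxIter f n (σ 0)} : Set (Fm L)) = _
        rw [hσ0, hσ1]
      have e2 : Fm.subst σ (boxIter f n (Fm.var 1)) = boxIter f n c := by
        rw [subst_boxIter]
        show boxIter f n (σ 1) = _
        rw [hσ1]
      rw [e1, e2] at h2
      refine ℒ.cut _ Γ _ h2 ?_
      intro γ hγ
      rcases hγ with rfl | rfl | rfl
      · exact ha
      · exact hc
      · exact hba
    apply Quotient.sound
    refine ⟨iff_of_true ht ht', fun f hf n => ?_⟩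
    exact ⟨fun hd => hkey f hf n t t' ht ht' hd, fun hd => hkey f hf n t' t ht' ht hd⟩
  · -- matrix semantics
    intro Δ φ
    constructor
    · intro hd m hm v hv
      obtain ⟨Γ, rfl⟩ := hm
      have hvw : v = fun n => Quotient.mk (thetaSetoid ℒ Γ) ((v n).out) :=
        funext fun n => (Quotient.out_eq (v n)).symm
      have him : ∀ γ' ∈ Fm.subst (fun n => (v n).out) '' Δ, ℒ.deriv Γ γ' := by
        rintro γ' ⟨γ, hγ, rfl⟩
        have h1 := hv γ hγ
        rw [hvw] at h1
        have h1' : Fm.eval (QAlg ℒ Γ)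
            (fun n => Quotient.mk (thetaSetoid ℒ Γ) ((v n).out)) γ ∈ (QMat ℒ Γ).F := h1
        rw [QAlg_eval hL ℒ Γ _ γ] at h1'
        exact (QMat_mem_F ℒ Γ _).mp h1'
      have h2 := ℒ.cut _ Γ _ (ℒ.substInv (fun n => (v n).out) Δ φ hd) him
      have h3 : Fm.eval (QAlg ℒ Γ)
          (fun n => Quotient.mk (thetaSetoid ℒ Γ) ((v n).out)) φ ∈ (QMat ℒ Γ).F := by
        rw [QAlg_eval hL ℒ Γ _ φ]
        exact (QMat_mem_F ℒ Γ _).mpr h2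
      rw [hvw]
      exact h3
    · intro hind
      have h1 : Fm.eval (QAlg ℒ Δ)
          (fun n => Quotient.mk (thetaSetoid ℒ Δ) (Fm.var n)) φ ∈ (QMat ℒ Δ).F := by
        refine hind (QMat ℒ Δ) ⟨Δ, rfl⟩
          (fun n => Quotient.mk (thetaSetoid ℒ Δ) (Fm.var n)) ?_
        intro γ hγ
        show Fm.eval (QAlg ℒ Δ)
          (fun n => Quotient.mk (thetaSetoid ℒ Δ) (Fm.var n)) γ ∈ (QMat ℒ Δ).F
        rw [QAlg_eval hL ℒ Δ _ γ, Fm.subst_var]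
        exact (QMat_mem_F ℒ Δ _).mpr (ℒ.axm Δ γ hγ)
      rw [QAlg_eval hL ℒ Δ _ φ, Fm.subst_var] at h1
      exact (QMat_mem_F ℒ Δ _).mp h1
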